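/- Fix d ≥ 2 and δ ∈ [0,1]. For every unit vector ψ ∈ ℂ^d, with ρ_ψ := (1−δ)|ψ⟩⟨ψ| + (δ/d)·I_d and λ₀ := 1 − (d−1)δ/d, the symmetric-projection purification protocol on two copies achieves fidelity numerator ⟨ψ| tr₂[Π₂ (ρ_ψ⊗ρ_ψ) Π₂] |ψ⟩ = (λ₀ + λ₀²)/2. -/

import Mathlib

open Matrix

/-- Permutation matrix on `(ℂ^d)^{⊗n}` permuting tensor factors. -/
noncomputable def permMat (n d : ℕ) (σ : Equiv.Perm (Fin n)) :
    Matrix (Fin n → Fin d) (Fin n → Fin d) ℂ :=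
  Matrix.of fun v w => if v = w ∘ σ then 1 else 0

/-- Projector onto the symmetric subspace of `(ℂ^d)^{⊗n}`. -/
noncomputable def symProj (n d : ℕ) :
    Matrix (Fin n → Fin d) (Fin n → Fin d) ℂ :=
  ((n.factorial : ℂ)⁻¹) • ∑ σ : Equiv.Perm (Fin n), permMat n d σ

/-- `n`-fold tensor (Kronecker) power of a `d×d` matrix. -/
noncomputable def tpow {d : ℕ} (A : Matrix (Fin d) (Fin d) ℂ) (n : ℕ) :
    Matrix (Fin n → Fin d) (Fin n → Fin d) ℂ :=
  Matrix.of fun v w => ∏ i, A (v i) (w i)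

/-- Partial trace over all tensor factors except the first. -/
noncomputable def ptrRest {n d : ℕ}
    (M : Matrix (Fin (n + 1) → Fin d) (Fin (n + 1) → Fin d) ℂ) :
    Matrix (Fin d) (Fin d) ℂ :=
  Matrix.of fun i j => ∑ t : Fin n → Fin d, M (Fin.cons i t) (Fin.cons j t)

/-- For `d ≥ 2`, `δ ∈ [0,1]` and any unit vector `ψ ∈ ℂ^d`, with
`ρ_ψ = (1−δ)|ψ⟩⟨ψ| + (δ/d)I` and `λ₀ = 1 − (d−1)δ/d`, the two-copy
symmetric-projection protocol achieves fidelity numerator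
`⟨ψ| tr₂[Π₂ (ρ_ψ⊗ρ_ψ) Π₂] |ψ⟩ = (λ₀ + λ₀²)/2`. -/
lemma comp_swap_swap {d : ℕ} (w : Fin 2 → Fin d) :
    (w ∘ ⇑(Equiv.swap (0:Fin 2) 1)) ∘ ⇑(Equiv.swap (0:Fin 2) 1) = w := by
  funext x; simp [Function.comp]

lemma permMat_one (d : ℕ) : permMat 2 d 1 = 1 := by
  ext v w
  simp [permMat, Matrix.one_apply, Function.comp, funext_iff, eq_comm]

lemma symProj_eq (d : ℕ) :
    symProj 2 d = (2:ℂ)⁻¹ • (1 + permMat 2 d (Equiv.swap 0 1)) := by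
  have h : (Finset.univ : Finset (Equiv.Perm (Fin 2))) = {1, Equiv.swap 0 1} := by decide
  rw [symProj, h]
  rw [Finset.sum_pair (by decide)]
  norm_num [permMat_one]

lemma permMat_mul_apply {d : ℕ} (M : Matrix (Fin 2 → Fin d) (Fin 2 → Fin d) ℂ)
    (v w : Fin 2 → Fin d) :
    (permMat 2 d (Equiv.swap 0 1) * M) v w = M (v ∘ ⇑(Equiv.swap (0:Fin 2) 1)) w := by
  rw [Matrix.mul_apply]
  rw [Finset.sum_eq_single (v ∘ ⇑(Equiv.swap (0:Fin 2) 1))]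
  · simp [permMat, comp_swap_swap]
  · intro u _ hu
    have : ¬ v = u ∘ ⇑(Equiv.swap (0:Fin 2) 1) := by
      intro h; apply hu; rw [h, comp_swap_swap]
    simp [permMat, this]
  · simp

lemma mul_permMat_apply {d : ℕ} (M : Matrix (Fin 2 → Fin d) (Fin 2 → Fin d) ℂ)
    (v w : Fin 2 → Fin d) :
    (M * permMat 2 d (Equiv.swap 0 1)) v w = M v (w ∘ ⇑(Equiv.swap (0:Fin 2) 1)) := by
  rw [Matrix.mul_apply]
  rw [Finset.sum_eq_single (w ∘ ⇑(Equiv.swap (0:Fin 2) 1))]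
  · simp [permMat, comp_swap_swap]
  · intro u _ hu
    simp [permMat, hu]
  · simp

lemma permMat_sq (d : ℕ) :
    permMat 2 d (Equiv.swap 0 1) * permMat 2 d (Equiv.swap 0 1) = 1 := by
  ext v w
  rw [permMat_mul_apply]
  simp only [permMat, Matrix.of_apply, Matrix.one_apply]
  congr 1
  apply propext
  constructor
  · intro h
    have := congrArg (fun f => f ∘ ⇑(Equiv.swap (0:Fin 2) 1)) h
    simpa [comp_swap_swap] using this
  · intro h; rw [h]

lemma tpow_comm {d : ℕ} (A : Matrix (Fin d) (Fin d) ℂ) :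
    permMat 2 d (Equiv.swap 0 1) * tpow A 2 = tpow A 2 * permMat 2 d (Equiv.swap 0 1) := by
  ext v w
  rw [permMat_mul_apply, mul_permMat_apply]
  simp [tpow, Fin.prod_univ_two, Function.comp, mul_comm]

lemma ptr_add {d : ℕ} (M N : Matrix (Fin 2 → Fin d) (Fin 2 → Fin d) ℂ) :
    ptrRest (n := 1) (M + N) = ptrRest (n := 1) M + ptrRest (n := 1) N := by
  ext i j; simp [ptrRest, Finset.sum_add_distrib]

lemma ptr_smul {d : ℕ} (c : ℂ) (M : Matrix (Fin 2 → Fin d) (Fin 2 → Fin d) ℂ) :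
    ptrRest (n := 1) (c • M) = c • ptrRest (n := 1) M := by
  ext i j; simp [ptrRest, Finset.mul_sum]

lemma ptr_tpow {d : ℕ} (A : Matrix (Fin d) (Fin d) ℂ) :
    ptrRest (n := 1) (tpow A 2) = A.trace • A := by
  ext i j
  have h1 : ∀ t : Fin 1 → Fin d,
      tpow A 2 (Fin.cons i t) (Fin.cons j t) = A (t 0) (t 0) * A i j := by
    intro t
    simp [tpow, Fin.prod_univ_two, mul_comm]
  simp only [ptrRest, Matrix.of_apply, h1]
  rw [Fintype.sum_equiv (Equiv.funUnique (Fin 1) (Fin d))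
    (fun t : Fin 1 → Fin d => A (t 0) (t 0) * A i j) (fun k => A k k * A i j)
    (fun t => rfl)]
  rw [← Finset.sum_mul, Matrix.trace]
  simp [Matrix.diag, Matrix.smul_apply]

lemma ptr_P_tpow {d : ℕ} (A : Matrix (Fin d) (Fin d) ℂ) :
    ptrRest (n := 1) (permMat 2 d (Equiv.swap 0 1) * tpow A 2) = A * A := by
  ext i j
  have h1 : ∀ t : Fin 1 → Fin d,
      (permMat 2 d (Equiv.swap 0 1) * tpow A 2) (Fin.cons i t) (Fin.cons j t)
        = A i (t 0) * A (t 0) j := by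
    intro t
    rw [permMat_mul_apply]
    simp [tpow, Fin.prod_univ_two, Function.comp, mul_comm]
  simp only [ptrRest, Matrix.of_apply, h1]
  rw [Fintype.sum_equiv (Equiv.funUnique (Fin 1) (Fin d))
    (fun t : Fin 1 → Fin d => A i (t 0) * A (t 0) j) (fun k => A i k * A k j)
    (fun t => rfl)]
  rw [Matrix.mul_apply]

lemma sandwich {d : ℕ} (A : Matrix (Fin d) (Fin d) ℂ) :
    symProj 2 d * tpow A 2 * symProj 2 d
      = (2:ℂ)⁻¹ • (tpow A 2 + permMat 2 d (Equiv.swap 0 1) * tpow A 2) := by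
  set P := permMat 2 d (Equiv.swap 0 1) with hP
  set T := tpow A 2 with hT
  have hc : P * T = T * P := tpow_comm A
  have hP2 : P * P = 1 := permMat_sq d
  rw [symProj_eq]
  have e1 : (1 + P) * T * (1 + P) = T + P * T + (T * P + P * T * P) := by
    noncomm_ring
  have e2 : P * T * P = T := by
    rw [hc, mul_assoc, hP2, mul_one]
  rw [Matrix.smul_mul, Matrix.smul_mul, Matrix.mul_smul, smul_smul, e1, e2, ← hc]
  have e3 : T + P * T + (P * T + T) = (2:ℂ) • (T + P * T) := by
    rw [two_smul]; abel
  rw [e3, smul_smul]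
  norm_num

theorem stmt1 (d : ℕ) (hd : 2 ≤ d) (δ : ℝ) (hδ : δ ∈ Set.Icc (0 : ℝ) 1)
    (ψ : Fin d → ℂ) (hψ : star ψ ⬝ᵥ ψ = 1) :
    star ψ ⬝ᵥ
      (ptrRest (n := 1)
        (symProj 2 d *
          tpow (((1 - δ : ℝ) : ℂ) • Matrix.vecMulVec ψ (star ψ)
            + ((δ / d : ℝ) : ℂ) • (1 : Matrix (Fin d) (Fin d) ℂ)) 2 *
          symProj 2 d) *ᵥ ψ)
      = ((((1 - ((d : ℝ) - 1) * δ / d) + (1 - ((d : ℝ) - 1) * δ / d) ^ 2) / 2 : ℝ) : ℂ) := by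
  have hd0 : (d : ℝ) ≠ 0 := by
    have : 0 < d := lt_of_lt_of_le (by norm_num) hd
    exact_mod_cast this.ne'
  have hdC : (d : ℂ) ≠ 0 := by exact_mod_cast hd0
  set A := (((1 - δ : ℝ) : ℂ) • Matrix.vecMulVec ψ (star ψ)
      + ((δ / d : ℝ) : ℂ) • (1 : Matrix (Fin d) (Fin d) ℂ)) with hA
  have htrv : Matrix.trace (Matrix.vecMulVec ψ (star ψ)) = 1 := by
    have : Matrix.trace (Matrix.vecMulVec ψ (star ψ)) = ψ ⬝ᵥ star ψ := by
      simp [Matrix.trace, Matrix.diag, Matrix.vecMulVec, dotProduct]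
    rw [this, dotProduct_comm, hψ]
  have htr : A.trace = 1 := by
    rw [hA, Matrix.trace_add, Matrix.trace_smul, Matrix.trace_smul, htrv, Matrix.trace_one]
    simp only [smul_eq_mul, mul_one, Fintype.card_fin]
    have : ((δ / d : ℝ) : ℂ) * (d : ℂ) = (δ : ℂ) := by
      push_cast
      rw [div_mul_cancel₀ _ hdC]
    rw [this]
    push_cast
    ring
  have hvv : Matrix.vecMulVec ψ (star ψ) *ᵥ ψ = ψ := by
    funext i
    have : (Matrix.vecMulVec ψ (star ψ) *ᵥ ψ) i = ψ i * (star ψ ⬝ᵥ ψ) := by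
      simp [Matrix.mulVec, Matrix.vecMulVec, dotProduct, Finset.mul_sum, mul_assoc]
    rw [this, hψ, mul_one]
  have hAψ : A *ᵥ ψ = ((1 - ((d : ℝ) - 1) * δ / d : ℝ) : ℂ) • ψ := by
    rw [hA, Matrix.add_mulVec, Matrix.smul_mulVec, Matrix.smul_mulVec, hvv,
      Matrix.one_mulVec, ← add_smul]
    congr 1
    push_cast
    field_simp
    ring
  rw [sandwich, ptr_smul, ptr_add, ptr_tpow, ptr_P_tpow, htr, one_smul,
    Matrix.smul_mulVec, Matrix.add_mulVec, ← Matrix.mulVec_mulVec, hAψ,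
    Matrix.mulVec_smul, hAψ]
  rw [dotProduct_smul]
  simp only [smul_smul, ← add_smul, dotProduct_smul, hψ, smul_eq_mul, mul_one]
  push_cast
  ring
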